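/- Let φ be the morphism a ↦ ab, b ↦ a, and let x: ℤ → {a,b} be the bi-infinite fixed point of φ² with seed b.a, i.e., x = lim_{k→∞} φ^{2k}(b.a) where x restricted to [0,∞) is lim φ^{2k}(a) and x restricted to (−∞,0) is the sequence of right-aligned words φ^{2k}(b). Then for every n ∈ ℤ with n ∉ {−1, 0}, there exist m ∈ ℤ and ℓ ∈ {0,1,2} such that x_n = φ²(x_m)[ℓ] (the letter at index ℓ of the word φ²(x_m)) and rep_F(n) = rep_F(m) · h(ℓ), where h: 0 ↦ 00, 1 ↦ 01, 2 ↦ 10. Moreover, if n ∈ I_i \ I_{i−1} then m ∈ I_{i−1} \ I_{i−2}. -/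

import Mathlib

/-- Fibonacci sequence with `F 0 = 1`, `F 1 = 1`, `F 2 = 2`. -/
def F : ℕ → ℤ
  | 0 => 1
  | 1 => 1
  | (n+2) => F (n+1) + F n

/-- Numerical value of a binary digit. -/
def bv (x : Bool) : ℤ := if x then 1 else 0

/-- Value of an odd-length binary word `w = w_{2k+1} ⋯ w_1` (most significant
digit first): `val_F(w) = Σ_{i=1}^{2k} w_i F_i − w_{2k+1} F_{2k}`. -/
def valF (w : List Bool) : ℤ :=
  (∑ i ∈ Finset.range (w.length - 1), bv (w.reverse.getD i false) * F (i+1))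
    - bv (w.reverse.getD (w.length - 1) false) * F (w.length - 1)

/-- The word has no factor `11`. -/
def no11 (w : List Bool) : Prop :=
  List.Chain' (fun x y => ¬(x = true ∧ y = true)) w

/-- Words of the canonical representation language: odd length, no factor 11,
not beginning with 000 nor with 101. -/
def IsRep (w : List Bool) : Prop :=
  Odd w.length ∧ no11 w ∧
    ¬ ([false, false, false] <+: w) ∧ ¬ ([true, false, true] <+: w)

/-- `Ik k = {i ∈ ℤ : −F_{2k} ≤ i < F_{2k+1}}`. -/
def Ik (k : ℕ) : Set ℤ := {i : ℤ | -F (2*k) ≤ i ∧ i < F (2*k+1)}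

/-- Shifted version of `Ik` incorporating `I_{−1} = ∅`. -/
def Iext : ℕ → Set ℤ
  | 0 => ∅
  | (k+1) => Ik k

/-- The morphism `h : 0 ↦ 00, 1 ↦ 01, 2 ↦ 10` on single letters. -/
def h3 : Fin 3 → List Bool
  | 0 => [false, false]
  | 1 => [false, true]
  | 2 => [true, false]

/-- The Fibonacci morphism `φ : a ↦ ab, b ↦ a` applied to a letter,
where `a` is encoded by `false` and `b` by `true`. -/
def phiL (c : Bool) : List Bool := if c then [false] else [false, true]

/-- The Fibonacci morphism `φ` on words. -/
def phi (w : List Bool) : List Bool := w.flatMap phiL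

/-- `φ²` applied to a letter: `φ²(a) = aba`, `φ²(b) = ab`. -/
def phi2L (c : Bool) : List Bool := phi (phiL c)

-- chunk 1: basic arithmetic lemmas
section Basics

lemma F_pos : ∀ n, 1 ≤ F n := by
  intro n
  induction n using Nat.strong_induction_on with
  | _ n ih =>
    match n with
    | 0 => norm_num [F]
    | 1 => norm_num [F]
    | (m+2) =>
      have h1 := ih (m+1) (by omega)
      have h2 := ih m (by omega)
      simp only [F]; omega

lemma F_le_succ : ∀ n, F n ≤ F (n+1) := by
  intro n
  match n with
  | 0 => norm_num [F]
  | (m+1) => have := F_pos m; simp only [F]; omega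

lemma F_mono {a b : ℕ} (h : a ≤ b) : F a ≤ F b := by
  induction b with
  | zero => simpa [Nat.le_zero.mp h]
  | succ b ih =>
    rcases Nat.lt_or_ge a (b+1) with h'|h'
    · exact le_trans (ih (by omega)) (F_le_succ b)
    · have : a = b + 1 := by omega
      simp [this]

lemma F_add4 (n : ℕ) : F (n+4) = 3 * F (n+2) - F n := by
  show F (n+2+2) = _
  rw [F, F, F]; ring

/-- ℕ-valued Fibonacci. -/
def Fn : ℕ → ℕ
  | 0 => 1
  | 1 => 1
  | (n+2) => Fn (n+1) + Fn n

lemma F_eq_Fn : ∀ n, F n = (Fn n : ℤ) := by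
  intro n
  induction n using Nat.strong_induction_on with
  | _ n ih =>
    match n with
    | 0 => rfl
    | 1 => rfl
    | (m+2) =>
      have h1 := ih (m+1) (by omega)
      have h2 := ih m (by omega)
      simp only [F, Fn, h1, h2]; push_cast; ring

end Basics

section Posj

/-- LSB-first positional value starting at Fibonacci index `j`. -/
def posj : List Bool → ℕ → ℤ
  | [], _ => 0
  | c :: s, j => bv c * F j + posj s (j+1)

lemma bv_nonneg (c : Bool) : 0 ≤ bv c := by cases c <;> simp [bv]

lemma bv_le_one (c : Bool) : bv c ≤ 1 := by cases c <;> simp [bv]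

lemma posj_nonneg : ∀ (s : List Bool) (j : ℕ), 0 ≤ posj s j := by
  intro s
  induction s with
  | nil => intro j; simp [posj]
  | cons c s ih =>
    intro j
    have := ih (j+1)
    have h1 := bv_nonneg c
    have h2 := F_pos j
    simp only [posj]
    nlinarith

lemma posj_append : ∀ (s t : List Bool) (j : ℕ),
    posj (s ++ t) j = posj s j + posj t (j + s.length) := by
  intro s
  induction s with
  | nil => intro t j; simp [posj]
  | cons c s ih =>
    intro t j
    show bv c * F j + posj (s ++ t) (j+1)
        = bv c * F j + posj s (j+1) + posj t (j + (s.length+1))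
    rw [ih, show j + (s.length+1) = (j+1) + s.length from by ring]
    ring

lemma posj_add2 : ∀ (s : List Bool) (j : ℕ),
    posj s (j+2) = posj s (j+1) + posj s j := by
  intro s
  induction s with
  | nil => intro j; simp [posj]
  | cons c s ih =>
    intro j
    simp only [posj]
    have h := ih (j+1)
    have hF : F (j+2) = F (j+1) + F j := by rw [F]
    rw [show j+2+1 = j+1+2 by ring, h, hF]
    ring

lemma posj_five (s : List Bool) : posj s 5 = 3 * posj s 3 - posj s 1 := by
  have h1 := posj_add2 s 1
  have h2 := posj_add2 s 2
  have h3 := posj_add2 s 3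
  norm_num at h1 h2 h3
  omega

end Posj
section Bound

/-- The no-11 adjacency relation. -/
def R11 : Bool → Bool → Prop := fun x y => ¬(x = true ∧ y = true)

lemma posj_le : ∀ (r : List Bool) (j : ℕ), List.Chain' R11 r →
    posj r (j+1) ≤ F (r.length + j + 1) - F j
  | [], j, _ => by
      simp only [posj, List.length_nil, Nat.zero_add]
      have := F_le_succ j; omega
  | false :: s, j, h => by
      have ih := posj_le s (j+1) h.tail
      show bv false * F (j+1) + posj s (j+1+1) ≤ F (s.length + 1 + j + 1) - F j
      have h1 : F (s.length + (j+1) + 1) = F (s.length + 1 + j + 1) := by congr 1; omega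
      have h2 := F_le_succ j
      simp only [bv]
      rw [show j+1+1 = (j+1)+1 from rfl]
      simp only [Bool.false_eq_true, if_false]
      omega
  | [true], j, _ => by
      show bv true * F (j+1) + posj [] (j+1+1) ≤ F (1 + j + 1) - F j
      have : F (1 + j + 1) = F (j + 2) := by congr 1; omega
      simp only [posj, bv, if_true, this, F]
      omega
  | true :: true :: s, j, h => by
      rcases List.isChain_cons_cons.mp h with ⟨hR, -⟩
      exact absurd ⟨rfl, rfl⟩ hR
  | true :: false :: s, j, h => by
      have ih := posj_le s (j+2) h.tail.tail
      show bv true * F (j+1) + (bv false * F (j+1+1) + posj s (j+1+1+1))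
          ≤ F (s.length + 1 + 1 + j + 1) - F j
      have h1 : F (s.length + (j+2) + 1) = F (s.length + 1 + 1 + j + 1) := by congr 1; omega
      have h2 : F (j+2) = F (j+1) + F j := by rw [F]
      simp only [bv, if_true, Bool.false_eq_true, if_false]
      rw [show j+1+1+1 = (j+2)+1 from rfl]
      omega

lemma posj_le' (r : List Bool) (h : List.Chain' R11 r) :
    posj r 1 ≤ F (r.length + 1) - 1 := by
  have := posj_le r 0 h
  simpa [F] using this

end Bound

section Sum

lemma posj_eq_sum : ∀ (s : List Bool), ∀ (j : ℕ),
    posj s j = ∑ i ∈ Finset.range s.length, bv (s.getD i false) * F (i+j) := by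
  intro s
  induction s with
  | nil => intro j; simp [posj]
  | cons c s ih =>
    intro j
    rw [List.length_cons, Finset.sum_range_succ']
    simp only [List.getD_cons_succ, List.getD_cons_zero, Nat.zero_add]
    have hh : ∀ i : ℕ, i + 1 + j = i + (j+1) := fun i => by ring
    simp only [hh]
    rw [← ih (j+1)]
    simp only [posj]
    ring

end Sum
section Bridge

lemma valF_cons (T : Bool) (body : List Bool) :
    valF (T :: body) = posj body.reverse 1 - bv T * F body.length := by
  unfold valF
  have hlen : (T :: body).length - 1 = body.length := by simp
  have hrev : (T :: body).reverse = body.reverse ++ [T] := by simp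
  have hlenr : body.reverse.length = body.length := by simp
  rw [hlen, hrev]
  have h1 : ∀ i ∈ Finset.range body.length,
      bv ((body.reverse ++ [T]).getD i false) * F (i+1)
        = bv (body.reverse.getD i false) * F (i+1) := by
    intro i hi
    rw [List.getD_append _ _ _ _ (by rw [hlenr]; exact Finset.mem_range.mp hi)]
  rw [Finset.sum_congr rfl h1]
  have h2 : (body.reverse ++ [T]).getD body.length false = T := by
    rw [List.getD_append_right _ _ _ _ (by omega), hlenr]
    simp
  rw [h2, posj_eq_sum, hlenr]

end Bridge

section AID

lemma valF_append2 (T : Bool) (body : List Bool) (d1 d0 : Bool) :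
    valF ((T :: body) ++ [d1, d0])
      = bv d0 + 2 * bv d1 + posj body.reverse 3 - bv T * F (body.length + 2) := by
  rw [show (T :: body) ++ [d1, d0] = T :: (body ++ [d1, d0]) from rfl, valF_cons]
  have hrev : (body ++ [d1, d0]).reverse = [d0, d1] ++ body.reverse := by simp
  rw [hrev, posj_append]
  have : posj [d0, d1] 1 = bv d0 * F 1 + bv d1 * F 2 := by
    simp only [posj]; ring
  rw [this]
  have hF1 : F 1 = 1 := rfl
  have hF2 : F 2 = 2 := by norm_num [F]
  rw [hF1, hF2]
  have hl : (body ++ [d1, d0]).length = body.length + 2 := by simp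
  have hl2 : (1 : ℕ) + [d0, d1].length = 3 := rfl
  rw [hl, hl2]
  ring

/-- AID1 -/
lemma valF_append_h3 (T : Bool) (body : List Bool) (ℓ : Fin 3) :
    valF ((T :: body) ++ h3 ℓ)
      = valF ((T :: body) ++ [false, false]) + (ℓ : ℤ) := by
  fin_cases ℓ <;> simp only [h3, valF_append2, Fin.val] <;> norm_num [bv] <;> ring

/-- AID2 -/
lemma valF_append_h3_00 (T : Bool) (body : List Bool) (ℓ : Fin 3) :
    valF ((T :: body) ++ h3 ℓ ++ [false, false])
      = 3 * valF ((T :: body) ++ [false, false]) - valF (T :: body)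
        + posj (h3 ℓ).reverse 3 := by
  have key : ∀ d1 d0 : Bool, valF ((T :: body) ++ [d1, d0] ++ [false, false])
      = 3 * valF ((T :: body) ++ [false, false]) - valF (T :: body)
        + posj [d0, d1] 3 := by
    intro d1 d0
    have e1 : (T :: body) ++ [d1, d0] ++ [false, false]
        = T :: (body ++ [d1, d0, false, false]) := by simp
    rw [e1, valF_cons]
    have hrev : (body ++ [d1, d0, false, false]).reverse
        = [false, false, d0, d1] ++ body.reverse := by simp
    rw [hrev, posj_append]
    have h5 : posj body.reverse (1 + (4:ℕ)) = 3 * posj body.reverse 3 - posj body.reverse 1 := by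
      rw [show (1:ℕ) + 4 = 5 from rfl, posj_five]
    rw [show ([false, false, d0, d1] : List Bool).length = 4 from rfl, h5]
    rw [valF_append2, valF_cons]
    have hp : posj [false, false, d0, d1] 1 = posj [d0, d1] 3 := by
      simp [posj, bv]
    rw [hp]
    have hlen : (body ++ [d1, d0, false, false]).length = body.length + 4 := by simp
    rw [hlen]
    have hF4 : F (body.length + 4) = 3 * F (body.length + 2) - F body.length := F_add4 _
    rw [hF4]
    cases T <;> simp [bv] <;> ring
  fin_cases ℓ
  · simpa [h3] using key false false
  · simpa [h3] using key false true
  · simpa [h3] using key true false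

lemma posj_h3 (ℓ : Fin 3) : posj (h3 ℓ).reverse 3 = if (ℓ:ℕ) = 1 then 3 else if (ℓ:ℕ) = 2 then 5 else 0 := by
  fin_cases ℓ <;> norm_num [h3, posj, bv, F]

end AID
section Chains

lemma no11_chain {w : List Bool} (h : no11 w) : List.Chain' R11 w := h

lemma chain_rev {s : List Bool} (h : List.Chain' R11 s) : List.Chain' R11 s.reverse := by
  exact List.isChain_reverse.mpr (h.imp (fun a b hab => fun ⟨hb, ha⟩ => hab ⟨ha, hb⟩))

end Chains

section Range

lemma valF_cons3 (T d e : Bool) (body : List Bool) (k : ℕ) (hbl : body.length = 2*k) :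
    valF (T :: d :: e :: body)
      = posj body.reverse 1 + bv e * F (2*k+1) + bv d * F (2*k+2)
        - bv T * F (2*k+2) := by
  rw [valF_cons]
  have hrev : (d :: e :: body).reverse = body.reverse ++ [e, d] := by simp
  rw [hrev, posj_append, List.length_reverse, hbl]
  have h5 : posj [e, d] (1 + 2*k) = bv e * F (2*k+1) + bv d * F (2*k+2) := by
    simp only [posj]
    rw [show 1 + 2*k = 2*k+1 from by ring, show 2*k+1+1 = 2*k+2 from rfl]
    ring
  rw [h5]
  have h6 : (d :: e :: body).length = 2*k+2 := by simp [hbl]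
  rw [h6]
  ring

lemma rangeA {w : List Bool} {k : ℕ} (hw : IsRep w) (hl : w.length = 2*k+1) :
    -F (2*k) ≤ valF w ∧ valF w < F (2*k+1) := by
  obtain ⟨T, body, rfl⟩ : ∃ T body, w = T :: body := by
    cases w with
    | nil => simp at hl
    | cons a l => exact ⟨a, l, rfl⟩
  have hbl : body.length = 2*k := by simpa using hl
  rw [valF_cons, hbl]
  have h1 := posj_nonneg body.reverse 1
  have h2 := posj_le' body.reverse (chain_rev (no11_chain hw.2.1).tail)
  rw [List.length_reverse, hbl] at h2
  have h3 := F_pos (2*k)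
  cases T <;> simp [bv] <;> omega

lemma rangeB {w : List Bool} {k : ℕ} (hw : IsRep w) (hl : w.length = 2*k+3) :
    valF w < -F (2*k) ∨ F (2*k+1) ≤ valF w := by
  obtain ⟨T, d, e, body, rfl⟩ : ∃ T d e body, w = T :: d :: e :: body := by
    match w with
    | a :: b :: c :: l => exact ⟨a, b, c, l, rfl⟩
  have hbl : body.length = 2*k := by simpa using hl
  rw [valF_cons3 T d e body k hbl]
  have h1 := posj_nonneg body.reverse 1
  have h2 := posj_le' body.reverse (chain_rev ((no11_chain hw.2.1).tail.tail.tail))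
  rw [List.length_reverse, hbl] at h2
  have hF1 := F_pos (2*k)
  have hF0 := F_pos (2*k+1)
  have hF2 : F (2*k+2) = F (2*k+1) + F (2*k) := by rw [F]
  cases T with
  | true =>
    have hd : d = false := by
      rcases List.isChain_cons_cons.mp (no11_chain hw.2.1) with ⟨hR, -⟩
      cases d
      · rfl
      · exact absurd ⟨rfl, rfl⟩ hR
    have he : e = false := by
      cases e
      · rfl
      · exact absurd ⟨body, by rw [hd]; rfl⟩ hw.2.2.2
    left
    rw [hd, he]
    simp only [bv, if_false, if_true, Bool.false_eq_true]
    omega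
  | false =>
    cases d with
    | true =>
      right
      cases e <;> simp only [bv, if_true, if_false, Bool.false_eq_true] <;> omega
    | false =>
      cases e with
      | true =>
        right
        simp only [bv, if_true, if_false, Bool.false_eq_true]
        omega
      | false =>
        exact absurd ⟨body, rfl⟩ hw.2.2.1

lemma signT {w : List Bool} (hw : IsRep w) {T : Bool} {body : List Bool}
    (hTb : w = T :: body) : (T = true → valF w < 0) ∧ (T = false → 0 ≤ valF w) := by
  subst hTb
  constructor
  · intro hT
    subst hT
    cases body with
    | nil =>
      show valF [true] < 0
      rw [valF_cons]
      simp [posj, bv, F]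
    | cons d body' =>
      obtain ⟨e, body'', rfl⟩ : ∃ e body'', body' = e :: body'' := by
        cases body' with
        | nil =>
          exfalso
          rcases hw.1 with ⟨r, hr⟩
          simp only [List.length_cons, List.length_nil] at hr
          omega
        | cons e l => exact ⟨e, l, rfl⟩
      obtain ⟨k, hk⟩ : ∃ k, body''.length = 2*k := by
        rcases hw.1 with ⟨r, hr⟩
        simp only [List.length_cons] at hr
        exact ⟨r - 1, by omega⟩
      have hd : d = false := by
        rcases List.isChain_cons_cons.mp (no11_chain hw.2.1) with ⟨hR, -⟩
        cases d
        · rfl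
        · exact absurd ⟨rfl, rfl⟩ hR
      have he : e = false := by
        cases e
        · rfl
        · exact absurd ⟨body'', by rw [hd]; rfl⟩ hw.2.2.2
      rw [valF_cons3 true d e body'' k hk, hd, he]
      have h1 := posj_nonneg body''.reverse 1
      have h2 := posj_le' body''.reverse (chain_rev ((no11_chain hw.2.1).tail.tail.tail))
      rw [List.length_reverse, hk] at h2
      have hF1 := F_pos (2*k)
      have hF2 : F (2*k+2) = F (2*k+1) + F (2*k) := by rw [F]
      simp only [bv, if_false, if_true, Bool.false_eq_true]
      omega
  · intro hT
    subst hT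
    rw [valF_cons]
    have := posj_nonneg body.reverse 1
    simp [bv]
    omega

end Range
section Uniq

lemma zeck_uniq : ∀ (r : List Bool), ∀ (r' : List Bool), r.length = r'.length →
    List.Chain' R11 r → List.Chain' R11 r' → posj r 1 = posj r' 1 → r = r' := by
  intro r
  induction r using List.reverseRecOn with
  | nil =>
    intro r' hl _ _ _
    symm
    rw [← List.length_eq_zero_iff]
    simp only [List.length_nil] at hl
    omega
  | append_singleton s a ih =>
    intro r' hl hc hc' hv
    rcases List.eq_nil_or_concat r' with rfl | ⟨t, b, rfl⟩
    · simp at hl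
    rw [List.concat_eq_append] at hl hc' hv ⊢
    have hlen : s.length = t.length := by simp at hl; omega
    have hcs : List.Chain' R11 s := (List.isChain_append.mp hc).1
    have hct : List.Chain' R11 t := (List.isChain_append.mp hc').1
    rw [posj_append, posj_append] at hv
    simp only [posj] at hv
    have hFL : F (1 + s.length) = F (1 + t.length) := by rw [hlen]
    have hbs := posj_le' s hcs
    have hbt := posj_le' t hct
    have hps := posj_nonneg s 1
    have hpt := posj_nonneg t 1
    have hFpos := F_pos (1 + s.length)
    have hFeq : F (s.length + 1) = F (1 + s.length) := by rw [Nat.add_comm]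
    have hFeq' : F (t.length + 1) = F (1 + t.length) := by rw [Nat.add_comm]
    have hab : a = b := by
      cases a <;> cases b <;> simp only [bv, if_true, if_false, Bool.false_eq_true] at hv <;>
        first
        | rfl
        | (exfalso; rw [hFeq, hFL] at hbs; rw [hFeq', ← hFL] at hbt; omega)
    subst hab
    have hst : s = t := by
      apply ih t hlen hcs hct
      rw [hFL] at hv
      cases a <;> simp only [bv, if_true, if_false, Bool.false_eq_true] at hv <;> omega
    rw [hst]

lemma odd_rep_len {w : List Bool} (hw : IsRep w) : ∃ k, w.length = 2*k+1 := by
  rcases hw.1 with ⟨r, hr⟩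
  exact ⟨r, by omega⟩

lemma uniq_len {u v : List Bool} (hu : IsRep u) (hv : IsRep v)
    (hval : valF u = valF v) : u.length = v.length := by
  obtain ⟨K, hK⟩ := odd_rep_len hu
  obtain ⟨K', hK'⟩ := odd_rep_len hv
  -- auxiliary: impossible that K < K'
  have aux : ∀ (p q : List Bool) (a b : ℕ), IsRep p → IsRep q → valF p = valF q →
      p.length = 2*a+1 → q.length = 2*b+1 → a < b → False := by
    intro p q a b hp hq hpq hla hlb hab
    obtain ⟨c, rfl⟩ : ∃ c, b = c + 1 := ⟨b - 1, by omega⟩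
    have h1 := rangeA hp hla
    have h2 := rangeB hq (show q.length = 2*c+3 by omega)
    have h3 : F (2*a) ≤ F (2*c) := F_mono (by omega)
    have h4 : F (2*a+1) ≤ F (2*c+1) := F_mono (by omega)
    rw [hpq] at h1
    omega
  rcases Nat.lt_trichotomy K K' with h | h | h
  · exact absurd (aux u v K K' hu hv hval hK hK' h) not_false
  · omega
  · exact absurd (aux v u K' K hv hu hval.symm hK' hK h) not_false

lemma uniq {u v : List Bool} (hu : IsRep u) (hv : IsRep v)
    (hval : valF u = valF v) : u = v := by
  obtain ⟨T, s, rfl⟩ : ∃ T s, u = T :: s := by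
    cases u with
    | nil => rcases odd_rep_len hu with ⟨k, hk⟩; simp at hk
    | cons a l => exact ⟨a, l, rfl⟩
  obtain ⟨T', t, rfl⟩ : ∃ T' t, v = T' :: t := by
    cases v with
    | nil => rcases odd_rep_len hv with ⟨k, hk⟩; simp at hk
    | cons a l => exact ⟨a, l, rfl⟩
  have hlen := uniq_len hu hv hval
  simp only [List.length_cons] at hlen
  have hsT := signT hu rfl
  have hsT' := signT hv rfl
  have hTT : T = T' := by
    cases T <;> cases T'
    · rfl
    · have := hsT.2 rfl; have := hsT'.1 rfl; omega
    · have := hsT.1 rfl; have := hsT'.2 rfl; omega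
    · rfl
  subst hTT
  rw [valF_cons, valF_cons] at hval
  have hlen2 : s.length = t.length := by omega
  have hposs : posj s.reverse 1 = posj t.reverse 1 := by
    rw [hlen2] at hval
    omega
  have := zeck_uniq s.reverse t.reverse (by simp [hlen2])
    (chain_rev (no11_chain hu.2.1).tail) (chain_rev (no11_chain hv.2.1).tail) hposs
  have hst : s = t := by
    have h2 := congrArg List.reverse this
    simpa using h2
  rw [hst]

end Uniq

section Decomp

lemma decomp {w : List Bool} {k : ℕ} (hw : IsRep w) (hl : w.length = 2*k+3) :
    ∃ (u : List Bool) (ℓ : Fin 3), w = u ++ h3 ℓ ∧ IsRep u ∧ u.length = 2*k+1 := by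
  rcases List.eq_nil_or_concat w with rfl | ⟨w1, d0, rfl⟩
  · simp at hl
  rcases List.eq_nil_or_concat w1 with rfl | ⟨u, d1, rfl⟩
  · simp at hl
  rw [List.concat_eq_append, List.concat_eq_append] at hw hl ⊢
  have hw' : u ++ [d1] ++ [d0] = u ++ [d1, d0] := by simp
  rw [hw'] at hw hl ⊢
  have hulen : u.length = 2*k+1 := by simp at hl; omega
  have hch := no11_chain hw.2.1
  rcases List.isChain_append.mp hch with ⟨hcu, hcd, -⟩
  have hR : ¬(d1 = true ∧ d0 = true) := by
    rcases List.isChain_cons_cons.mp hcd with ⟨h, -⟩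
    exact h
  have hrepu : IsRep u := by
    refine ⟨?_, hcu, ?_, ?_⟩
    · exact ⟨k, by omega⟩
    · intro hp
      exact hw.2.2.1 (hp.trans ⟨[d1, d0], rfl⟩)
    · intro hp
      exact hw.2.2.2 (hp.trans ⟨[d1, d0], rfl⟩)
  cases d1 with
  | false =>
    cases d0 with
    | false => exact ⟨u, 0, rfl, hrepu, hulen⟩
    | true => exact ⟨u, 1, rfl, hrepu, hulen⟩
  | true =>
    cases d0 with
    | false => exact ⟨u, 2, rfl, hrepu, hulen⟩
    | true => exact absurd ⟨rfl, rfl⟩ hR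

end Decomp
section Words

def countFalse (w : List Bool) : ℕ := w.count false

def phi2 (w : List Bool) : List Bool := phi (phi w)

lemma phi_cons (c : Bool) (w : List Bool) : phi (c :: w) = phiL c ++ phi w := by
  simp [phi]

lemma phi_append (u v : List Bool) : phi (u ++ v) = phi u ++ phi v := by
  simp [phi]

lemma cf_append (u v : List Bool) : countFalse (u ++ v) = countFalse u + countFalse v := by
  simp [countFalse]

lemma len_phi (w : List Bool) : (phi w).length = w.length + countFalse w := by
  induction w with
  | nil => simp [phi, countFalse]
  | cons c w ih =>
    rw [phi_cons, List.length_append, ih]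
    cases c <;> simp [phiL, countFalse, List.count_cons] <;> omega

lemma cf_phi (w : List Bool) : countFalse (phi w) = w.length := by
  induction w with
  | nil => simp [phi, countFalse]
  | cons c w ih =>
    rw [phi_cons, cf_append, ih]
    cases c <;> simp [phiL, countFalse] <;> omega

lemma phi2_cons (c : Bool) (w : List Bool) : phi2 (c :: w) = phi2L c ++ phi2 w := by
  rw [phi2, phi_cons, phi_append, phi2L, phi2]

lemma phi2_append (u v : List Bool) : phi2 (u ++ v) = phi2 u ++ phi2 v := by
  rw [phi2, phi_append, phi_append, phi2, phi2]

lemma len_phi2 (w : List Bool) : (phi2 w).length = 2 * w.length + countFalse w := by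
  rw [phi2, len_phi, cf_phi, len_phi]; ring

lemma cf_phi2 (w : List Bool) : countFalse (phi2 w) = w.length + countFalse w := by
  rw [phi2, cf_phi, len_phi]

lemma phik_append (k : ℕ) (u v : List Bool) :
    (phi^[k]) (u ++ v) = (phi^[k]) u ++ (phi^[k]) v := by
  induction k generalizing u v with
  | zero => simp
  | succ k ih =>
    rw [Function.iterate_succ_apply, Function.iterate_succ_apply,
      Function.iterate_succ_apply, phi_append, ih]

lemma lenAB : ∀ k : ℕ, ((phi^[k]) [false]).length = Fn (k+1) ∧
    ((phi^[k]) [true]).length = Fn k := by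
  intro k
  induction k with
  | zero => simp [Fn]
  | succ k ih =>
    constructor
    · rw [Function.iterate_succ_apply, show phi [false] = [false] ++ [true] from rfl,
        phik_append, List.length_append, ih.1, ih.2]
      rw [show k+1+1 = k+2 from rfl, Fn]
    · rw [Function.iterate_succ_apply, show phi [true] = [false] from rfl, ih.1]

def Wk (k : ℕ) : List Bool := (phi^[2*k]) [true] ++ (phi^[2*k]) [false]

lemma len_Wk (k : ℕ) : (Wk k).length = Fn (2*k) + Fn (2*k+1) := by
  rw [Wk, List.length_append, (lenAB (2*k)).1, (lenAB (2*k)).2]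

lemma Wk_succ (k : ℕ) : Wk (k+1) = phi2 (Wk k) := by
  have h : ∀ v : List Bool, (phi^[2*(k+1)]) v = phi2 ((phi^[2*k]) v) := by
    intro v
    rw [show 2*(k+1) = 2 + 2*k from by ring, Function.iterate_add_apply]
    rfl
  rw [Wk, h, h, ← phi2_append, Wk]

end Words
section XW

variable (x : ℤ → Bool)
variable (hxpos : ∀ k : ℕ, ∀ n : ℤ, 0 ≤ n → n < ((phi^[2*k]) [false]).length →
      x n = ((phi^[2*k]) [false]).getD n.toNat false)
variable (hxneg : ∀ k : ℕ, ∀ n : ℤ, -(((phi^[2*k]) [true]).length : ℤ) ≤ n → n < 0 →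
      x n = ((phi^[2*k]) [true]).getD
              ((((phi^[2*k]) [true]).length : ℤ) + n).toNat false)

include hxpos hxneg in
lemma XW (k : ℕ) (n : ℤ) (h1 : -F (2*k) ≤ n) (h2 : n < F (2*k+1)) :
    x n = (Wk k).getD (n + F (2*k)).toNat false := by
  have hA : ((phi^[2*k]) [false]).length = Fn (2*k+1) := (lenAB (2*k)).1
  have hB : ((phi^[2*k]) [true]).length = Fn (2*k) := (lenAB (2*k)).2
  have hcast1 : F (2*k) = (Fn (2*k) : ℤ) := F_eq_Fn _
  have hcast2 : F (2*k+1) = (Fn (2*k+1) : ℤ) := F_eq_Fn _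
  rcases le_or_gt 0 n with hn | hn
  · have hx := hxpos k n hn (by rw [hA]; omega)
    rw [hx, Wk]
    rw [List.getD_append_right _ _ _ _ (by rw [hB]; omega)]
    congr 1
    rw [hB]
    omega
  · have hx := hxneg k n (by rw [hB]; omega) hn
    rw [hx, Wk]
    rw [List.getD_append _ _ _ _ (by rw [hB]; omega)]
    congr 1
    rw [hB]
    omega

end XW
section Main

lemma getLastD_append (l l' : List Bool) (d : Bool) (h : l' ≠ []) :
    (l ++ l').getLastD d = l'.getLastD d := by
  rw [List.getLastD_eq_getLast?, List.getLastD_eq_getLast?, List.getLast?_append,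
    List.getLast?_eq_getLast_of_ne_nil h]
  rfl

variable (x : ℤ → Bool)
variable (hxpos : ∀ k : ℕ, ∀ n : ℤ, 0 ≤ n → n < ((phi^[2*k]) [false]).length →
      x n = ((phi^[2*k]) [false]).getD n.toNat false)
variable (hxneg : ∀ k : ℕ, ∀ n : ℤ, -(((phi^[2*k]) [true]).length : ℤ) ≤ n → n < 0 →
      x n = ((phi^[2*k]) [true]).getD
              ((((phi^[2*k]) [true]).length : ℤ) + n).toNat false)

include hxpos hxneg in
lemma MAIN : ∀ (k : ℕ) (w : List Bool), IsRep w → w.length = 2*k+1 →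
    x (valF w) = w.getLastD false ∧
    ((countFalse ((Wk k).take (valF w + F (2*k)).toNat) : ℤ)
       = valF (w ++ [false, false]) + F (2*k+2) - 2*(valF w + F (2*k))) := by
  intro k
  induction k with
  | zero =>
    intro w hw hl
    obtain ⟨c, rfl⟩ : ∃ c, w = [c] := by
      match w, hl with
      | [c], _ => exact ⟨c, rfl⟩
    have hW0 : Wk 0 = [true, false] := rfl
    cases c with
    | false =>
      have hv : valF [false] = 0 := by decide
      constructor
      · rw [hv]
        have := XW x hxpos hxneg 0 0 (by decide) (by decide)
        rw [this, hW0]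
        rfl
      · rw [hv, hW0]
        decide
    | true =>
      have hv : valF [true] = -1 := by decide
      constructor
      · rw [hv]
        have := XW x hxpos hxneg 0 (-1) (by decide) (by decide)
        rw [this, hW0]
        rfl
      · rw [hv, hW0]
        decide
  | succ k ih =>
    intro w hw hl
    obtain ⟨u, ℓ, rfl, hu, hul⟩ := decomp (k := k) hw (by omega)
    obtain ⟨T, body, hTb⟩ : ∃ T body, u = T :: body := by
      cases u with
      | nil => simp at hul
      | cons a l => exact ⟨a, l, rfl⟩
    obtain ⟨hm1, hm2⟩ := rangeA hu hul
    obtain ⟨hn1, hn2⟩ := rangeA hw hl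
    obtain ⟨ihx, ihc⟩ := ih u hu hul
    set m := valF u with hm_def
    set Q := valF (u ++ [false, false]) with hQ_def
    have hvw : valF (u ++ h3 ℓ) = Q + ((ℓ:ℕ) : ℤ) := by
      rw [hQ_def, hTb]; exact valF_append_h3 T body ℓ
    have hF2 : F (2*k+2) = F (2*k+1) + F (2*k) := by rw [F]
    have hFp0 := F_pos (2*k)
    have hFp1 := F_pos (2*k+1)
    have hFp2 := F_pos (2*k+2)
    set p' : ℕ := (m + F (2*k)).toNat with hp'_def
    have hp'cast : (p' : ℤ) = m + F (2*k) := Int.toNat_of_nonneg (by omega)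
    have hWlen : ((Wk k).length : ℤ) = F (2*k) + F (2*k+1) := by
      rw [len_Wk]; push_cast [← F_eq_Fn]; ring
    have hp'lt : p' < (Wk k).length := by omega
    have htake_len : ((Wk k).take p').length = p' := List.length_take_of_le (by omega)
    set c : Bool := (Wk k).getD p' false with hc_def
    have hxm : x m = c := by
      rw [XW x hxpos hxneg k m hm1 hm2]
    have hcu : c = u.getLastD false := by rw [← hxm, ihx]
    have hsplit : Wk k = (Wk k).take p' ++ c :: (Wk k).drop (p'+1) := by
      conv_lhs => rw [← List.take_append_drop p' (Wk k)]
      rw [List.drop_eq_getElem_cons hp'lt]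
      congr 2
      rw [hc_def, List.getD_eq_getElem _ _ hp'lt]
    have hQlen : ((phi2 ((Wk k).take p')).length : ℤ) = Q + F (2*k+2) := by
      rw [len_phi2, htake_len]
      push_cast
      omega
    have hune : u ≠ [] := by rw [hTb]; simp
    have hc2 : (ℓ : ℕ) = 2 → c = false := by
      intro hℓ2
      have h2 : h3 ℓ = [true, false] := by
        fin_cases ℓ
        · simp at hℓ2
        · simp at hℓ2
        · rfl
      by_contra hcT
      have hcT' : c = true := by revert hcT; cases c <;> simp
      rcases List.isChain_append.mp (no11_chain hw.2.1) with ⟨-, -, hlink⟩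
      have hgl : u.getLast? = some (u.getLast hune) :=
        List.getLast?_eq_getLast_of_ne_nil hune
      have hlast : u.getLastD false = u.getLast hune := by
        rw [List.getLastD_eq_getLast?, hgl]; rfl
      have hRR : R11 (u.getLast hune) true := by
        refine hlink _ (Option.mem_def.mpr hgl) true ?_
        rw [h2]; rfl
      apply hRR
      refine ⟨?_, rfl⟩
      rw [← hlast, ← hcu, hcT']
    have hl3 : (ℓ : ℕ) < (phi2L c).length := by
      fin_cases ℓ
      · cases c <;> decide
      · cases c <;> decide
      · rw [hc2 rfl]; decide
    have hWk1 : Wk (k+1) = phi2 ((Wk k).take p') ++ (phi2L c ++ phi2 ((Wk k).drop (p'+1))) := by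
      rw [Wk_succ]
      conv_lhs => rw [hsplit]
      rw [phi2_append, phi2_cons]
      try simp [List.append_assoc]
    have hidx : (valF (u ++ h3 ℓ) + F (2*(k+1))).toNat
        = (phi2 ((Wk k).take p')).length + (ℓ : ℕ) := by
      have h22 : F (2*(k+1)) = F (2*k+2) := by rw [show 2*(k+1) = 2*k+2 from by ring]
      rw [hvw]
      omega
    constructor
    · rw [XW x hxpos hxneg (k+1) _ hn1 hn2, hidx, hWk1]
      rw [List.getD_append_right _ _ _ _ (by omega), Nat.add_sub_cancel_left]
      rw [List.getD_append _ _ _ _ hl3]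
      rw [getLastD_append u (h3 ℓ) false (by fin_cases ℓ <;> simp [h3])]
      fin_cases ℓ
      · cases c <;> rfl
      · cases c <;> rfl
      · rw [hc2 rfl]; rfl
    · rw [hidx, hWk1, List.take_length_add_append]
      rw [List.take_append_of_le_length (by omega)]
      rw [cf_append]
      have hcf2 : countFalse (phi2 ((Wk k).take p')) = p' + countFalse ((Wk k).take p') := by
        rw [cf_phi2, htake_len]
      rw [hcf2]
      have hsmall : (countFalse ((phi2L c).take (ℓ:ℕ)) : ℤ)
          = posj (h3 ℓ).reverse 3 - 2 * ((ℓ:ℕ) : ℤ) := by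
        fin_cases ℓ
        · cases c <;> decide
        · cases c <;> decide
        · rw [hc2 rfl]; decide
      have hAID2 : valF (u ++ h3 ℓ ++ [false, false])
          = 3 * Q - m + posj (h3 ℓ).reverse 3 := by
        rw [hQ_def, hm_def, hTb]
        rw [valF_append_h3_00 T body ℓ]
        try ring
      have hF4 : F (2*(k+1)+2) = 3 * F (2*k+2) - F (2*k) := by
        rw [show 2*(k+1)+2 = 2*k+4 from by ring]
        exact F_add4 _
      have h22 : F (2*(k+1)) = F (2*k+2) := by rw [show 2*(k+1) = 2*k+2 from by ring]
      rw [hAID2, hF4, hvw]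
      push_cast
      omega
end Main

/-- Desubstitution step for the bi-infinite fixed point `x = lim φ^{2k}(b.a)`:
for every `n ∉ {−1, 0}` there are `m ∈ ℤ`, `ℓ ∈ {0,1,2}` with
`x_n = φ²(x_m)[ℓ]` and `rep_F(n) = rep_F(m)·h(ℓ)`; moreover if
`n ∈ I_i \ I_{i−1}` then `m ∈ I_{i−1} \ I_{i−2}`. -/
theorem fixed_point_desubstitution
    (repF : ℤ → List Bool)
    (hrep : ∀ n : ℤ, IsRep (repF n) ∧ valF (repF n) = n)
    (x : ℤ → Bool)
    (hxpos : ∀ k : ℕ, ∀ n : ℤ, 0 ≤ n → n < ((phi^[2*k]) [false]).length →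
      x n = ((phi^[2*k]) [false]).getD n.toNat false)
    (hxneg : ∀ k : ℕ, ∀ n : ℤ, -(((phi^[2*k]) [true]).length : ℤ) ≤ n → n < 0 →
      x n = ((phi^[2*k]) [true]).getD
              ((((phi^[2*k]) [true]).length : ℤ) + n).toNat false)
    (n : ℤ) (hn0 : n ≠ 0) (hn1 : n ≠ -1) :
    ∃ m : ℤ, ∃ ℓ : Fin 3,
      x n = (phi2L (x m)).getD (ℓ : ℕ) false ∧
      repF n = repF m ++ h3 ℓ ∧
      ∀ i : ℕ, n ∈ Iext (i+1) \ Iext i → m ∈ Iext i \ Iext (i-1) := by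
  obtain ⟨hw, hv⟩ := hrep n
  obtain ⟨K, hK⟩ := odd_rep_len hw
  cases K with
  | zero =>
    exfalso
    obtain ⟨cc, hcc⟩ : ∃ cc, repF n = [cc] := by
      match hrn : repF n, hK with
      | [cc], _ => exact ⟨cc, rfl⟩
    rw [hcc] at hv
    cases cc
    · rw [show valF [false] = 0 from by decide] at hv; exact hn0 hv.symm
    · rw [show valF [true] = -1 from by decide] at hv; exact hn1 hv.symm
  | succ k =>
    obtain ⟨u, ℓ, hdec, hu, hul⟩ := decomp (k := k) hw (by omega)
    set m := valF u with hm_def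
    have hrepm : repF m = u := uniq (hrep m).1 hu (hrep m).2
    refine ⟨m, ℓ, ?_, ?_, ?_⟩
    · -- letter condition
      have h1 := (MAIN x hxpos hxneg (k+1) (repF n) hw hK).1
      rw [hv, hdec] at h1
      rw [getLastD_append u (h3 ℓ) false (by fin_cases ℓ <;> simp [h3])] at h1
      rw [h1]
      fin_cases ℓ <;> cases (x m) <;> decide
    · rw [hrepm, ← hdec]
    · intro i hi
      rcases hi with ⟨hi1, hi2⟩
      cases i with
      | zero =>
        exfalso
        have h0 : -F 0 ≤ n ∧ n < F 1 := hi1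
        have : F 0 = 1 := rfl
        have : F 1 = 1 := rfl
        omega
      | succ i' =>
        have hi1' : -F (2*i'+2) ≤ n ∧ n < F (2*i'+3) := by
          have := hi1
          rw [show (Iext (i'+1+1) : Set ℤ) = Ik (i'+1) from rfl] at this
          obtain ⟨a, b⟩ := this
          constructor
          · rw [show 2*(i'+1) = 2*i'+2 from by ring] at a; exact a
          · rw [show 2*(i'+1)+1 = 2*i'+3 from by ring] at b; exact b
        have hi2' : n < -F (2*i') ∨ F (2*i'+1) ≤ n := by
          by_contra hcon
          push_neg at hcon
          exact hi2 ⟨hcon.1, hcon.2⟩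
        obtain ⟨ha1, ha2⟩ := rangeA hw hK
        have hb := rangeB (k := k) hw (by omega)
        rw [hv] at ha1 ha2 hb
        rw [show 2*(k+1) = 2*k+2 from by ring] at ha1
        rw [show 2*(k+1)+1 = 2*k+3 from by ring] at ha2
        -- show i' = k
        have hik : i' = k := by
          rcases Nat.lt_trichotomy i' k with h | h | h
          · exfalso
            have h1 : F (2*i'+2) ≤ F (2*k) := F_mono (by omega)
            have h2 : F (2*i'+3) ≤ F (2*k+1) := F_mono (by omega)
            omega
          · exact h
          · exfalso
            have h1 : F (2*k+2) ≤ F (2*i') := F_mono (by omega)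
            have h2 : F (2*k+3) ≤ F (2*i'+1) := F_mono (by omega)
            omega
        subst hik
        obtain ⟨hc1, hc2⟩ := rangeA hu hul
        constructor
        · show m ∈ Ik i'
          exact ⟨by rwa [show 2*i' = 2*i' from rfl] at hc1, hc2⟩
        · show m ∉ Iext (i'+1-1)
          rw [show i'+1-1 = i' from rfl]
          cases i'' : i' with
          | zero => simp [Iext]
          | succ j =>
            rw [i''] at hul
            have hbu := rangeB (k := j) hu (by omega)
            intro hmem
            have hmem' : -F (2*j) ≤ m ∧ m < F (2*j+1) := hmem
            omega
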